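/- Let p1,…,p5 ∈ ℝ⁴ be affinely independent and a > 0. Then the quality heuristic η⁽²⁾ := trace(A(R,T)) / (2·√(trace(A(R,T)·A(R,T)ᵀ))) — which equals the ratio of the arithmetic mean to the root-mean-square of the four eigenvalues of A(R,T) — satisfies η⁽²⁾ = 6 · (Σ_{1 ≤ i < j ≤ 5} d_{ij}) / √Θ, where Θ is the explicit polynomial in the squared edge lengths given in the context; in particular η⁽²⁾ does not depend on a. -/

import Mathlib

open Real Matrix

/-- The edge-vector matrix of the regular pentatope with edge length `a`. -/
noncomputable def regularPentatopeMatrix (a : ℝ) : Matrix (Fin 4) (Fin 4) ℝ :=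
  !![a * Real.sqrt 3 / 2, a * Real.sqrt 3 / 2, a * Real.sqrt 3 / 3, a * Real.sqrt 3 / 3;
     -a / 2,              a / 2,               0,                   0;
     0,                   0,                   a * Real.sqrt 6 / 3, a * Real.sqrt 6 / 12;
     0,                   0,                   0,                   a * Real.sqrt 10 / 4]

/-- The edge-vector matrix of the pentatope with vertices `p 0, …, p 4`. -/
noncomputable def edgeMatrix (p : Fin 5 → EuclideanSpace ℝ (Fin 4)) :
    Matrix (Fin 4) (Fin 4) ℝ :=
  Matrix.of fun (k : Fin 4) (i : Fin 4) => (p i.succ - p 0) k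

/-- `A(R,T) = (R⁻¹)ᵀ · TᵀT · R⁻¹`. -/
noncomputable def shapeMatrix (a : ℝ) (p : Fin 5 → EuclideanSpace ℝ (Fin 4)) :
    Matrix (Fin 4) (Fin 4) ℝ :=
  ((regularPentatopeMatrix a)⁻¹)ᵀ * ((edgeMatrix p)ᵀ * edgeMatrix p) *
    (regularPentatopeMatrix a)⁻¹

/-- Squared Euclidean distance `d_{ij} = ‖p_j − p_i‖²`. -/
noncomputable def dsq (p : Fin 5 → EuclideanSpace ℝ (Fin 4)) (i j : Fin 5) : ℝ :=
  ‖p j - p i‖ ^ 2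

/-- The explicit polynomial `Θ` in the ten squared edge lengths. -/
def Theta (d12 d13 d14 d15 d23 d24 d25 d34 d35 d45 : ℝ) : ℝ :=
  600 * (d12 - d13) ^ 2 + 900 * d23 ^ 2 + 100 * (-2 * (d12 + d13) + d23) ^ 2 +
  75 * (d12 - d13 - 3 * d24 + 3 * d34) ^ 2 +
  25 * (d12 + d13 - 3 * d14 + d23 - 3 * (d24 + d34)) ^ 2 +
  25 * (d12 + d13 - 6 * d14 - 2 * d23 + 3 * (d24 + d34)) ^ 2 +
  45 * (d12 - d13 + d24 - 4 * d25 - d34 + 4 * d35) ^ 2 +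
  15 * (d12 + d13 + 2 * d14 - 8 * d15 - 2 * d23 - d24 + 4 * d25 - d34 + 4 * d35) ^ 2 +
  30 * (-d12 - d13 + d14 + 2 * d15 - d23 + d24 + 2 * d25 + d34 + 2 * d35 - 6 * d45) ^ 2 +
  9 * (d12 + d13 + d14 - 4 * d15 + d23 + d24 - 4 * d25 + d34 - 4 * (d35 + d45)) ^ 2

/-! ### Auxiliary machinery -/

/-- The edge-vector matrix of the regular pentatope with edge length `1`. -/
noncomputable def RP0 : Matrix (Fin 4) (Fin 4) ℝ :=
  !![Real.sqrt 3 / 2, Real.sqrt 3 / 2, Real.sqrt 3 / 3, Real.sqrt 3 / 3;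
     -(1:ℝ) / 2, 1 / 2, 0, 0;
     0, 0, Real.sqrt 6 / 3, Real.sqrt 6 / 12;
     0, 0, 0, Real.sqrt 10 / 4]

/-- The inverse of `RP0`. -/
noncomputable def M0 : Matrix (Fin 4) (Fin 4) ℝ :=
  !![Real.sqrt 3/3, -1, -(Real.sqrt 6)/6, -(Real.sqrt 10)/10;
     Real.sqrt 3/3,  1, -(Real.sqrt 6)/6, -(Real.sqrt 10)/10;
     0, 0, Real.sqrt 6/2, -(Real.sqrt 10)/10;
     0, 0, 0, 2*Real.sqrt 10/5]

/-- `M0 * M0ᵀ`, a rational matrix. -/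
noncomputable def Cm0 : Matrix (Fin 4) (Fin 4) ℝ :=
  !![8/5,-2/5,-2/5,-2/5; -2/5,8/5,-2/5,-2/5; -2/5,-2/5,8/5,-2/5; -2/5,-2/5,-2/5,8/5]

lemma hM0M0 : M0 * M0ᵀ = Cm0 := by
  have hs3 : Real.sqrt 3 ^ 2 = 3 := Real.sq_sqrt (by norm_num)
  have hs6 : Real.sqrt 6 ^ 2 = 6 := Real.sq_sqrt (by norm_num)
  have hs10 : Real.sqrt 10 ^ 2 = 10 := Real.sq_sqrt (by norm_num)
  ext i j
  rw [Matrix.mul_apply]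
  simp only [Matrix.transpose_apply]
  fin_cases i <;> fin_cases j <;>
    simp [M0, Cm0, Fin.sum_univ_four, Matrix.vecHead, Matrix.vecTail] <;>
    linarith [hs3, hs6, hs10]

lemma hR0M0 : RP0 * M0 = 1 := by
  have hs3 : Real.sqrt 3 ^ 2 = 3 := Real.sq_sqrt (by norm_num)
  have hs6 : Real.sqrt 6 ^ 2 = 6 := Real.sq_sqrt (by norm_num)
  have hs10 : Real.sqrt 10 ^ 2 = 10 := Real.sq_sqrt (by norm_num)
  ext i j
  rw [Matrix.mul_apply]
  fin_cases i <;> fin_cases j <;>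
    simp [RP0, M0, Fin.sum_univ_four, Matrix.vecHead, Matrix.vecTail, Matrix.one_apply] <;>
    linarith [hs3, hs6, hs10]

lemma hRa (a : ℝ) : regularPentatopeMatrix a = a • RP0 := by
  ext i j
  fin_cases i <;> fin_cases j <;>
    simp [regularPentatopeMatrix, RP0, Matrix.vecHead, Matrix.vecTail] <;> ring

lemma hRinv (a : ℝ) (ha : a ≠ 0) : (regularPentatopeMatrix a)⁻¹ = a⁻¹ • M0 := by
  apply Matrix.inv_eq_right_inv
  rw [hRa, Matrix.smul_mul, Matrix.mul_smul, smul_smul, mul_inv_cancel₀ ha, one_smul, hR0M0]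

/-- The Gram matrix entries of the edge vectors. -/
noncomputable def gram (p : Fin 5 → EuclideanSpace ℝ (Fin 4)) (i j : Fin 4) : ℝ :=
  ∑ k : Fin 4, (p i.succ - p 0) k * (p j.succ - p 0) k

lemma gram_symm (p : Fin 5 → EuclideanSpace ℝ (Fin 4)) (i j : Fin 4) :
    gram p i j = gram p j i := by
  simp [_root_.gram, mul_comm]

lemma gram_entry (p : Fin 5 → EuclideanSpace ℝ (Fin 4)) (i j : Fin 4) :
    ((edgeMatrix p)ᵀ * edgeMatrix p) i j = gram p i j := by
  rw [Matrix.mul_apply]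
  simp [edgeMatrix, _root_.gram]

lemma norm_sq_eq (v : EuclideanSpace ℝ (Fin 4)) : ‖v‖ ^ 2 = ∑ k : Fin 4, v k ^ 2 := by
  rw [EuclideanSpace.norm_eq, Real.sq_sqrt (by positivity)]
  simp [Real.norm_eq_abs, sq_abs]

lemma dsq_eq (p : Fin 5 → EuclideanSpace ℝ (Fin 4)) (i j : Fin 4) :
    dsq p i.succ j.succ = gram p i i + gram p j j - 2 * gram p i j := by
  simp only [dsq, _root_.gram, norm_sq_eq, Fin.sum_univ_four, PiLp.sub_apply]
  ring

lemma dsq0_eq (p : Fin 5 → EuclideanSpace ℝ (Fin 4)) (i : Fin 4) :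
    dsq p 0 i.succ = gram p i i := by
  simp only [dsq, _root_.gram, norm_sq_eq, Fin.sum_univ_four, PiLp.sub_apply]
  ring

lemma trace_conj1 (M G C : Matrix (Fin 4) (Fin 4) ℝ) (h : M * Mᵀ = C) :
    (Mᵀ * G * M).trace = (C * G).trace := by
  rw [Matrix.trace_mul_cycle, h]

lemma trace_conj2 (M G C : Matrix (Fin 4) (Fin 4) ℝ) (h : M * Mᵀ = C) :
    (Mᵀ * G * M * (Mᵀ * G * M)).trace = (C * G * (C * G)).trace := by
  have h1 : Mᵀ * G * M * (Mᵀ * G * M) = Mᵀ * (G * (C * G)) * M := by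
    rw [← h]; simp only [Matrix.mul_assoc]
  rw [h1, Matrix.trace_mul_cycle, h, Matrix.mul_assoc]

lemma key1 (G : Matrix (Fin 4) (Fin 4) ℝ) (g00 g01 g02 g03 g11 g12 g13 g22 g23 g33 : ℝ)
    (e00 : G 0 0 = g00) (e01 : G 0 1 = g01) (e02 : G 0 2 = g02) (e03 : G 0 3 = g03)
    (e10 : G 1 0 = g01) (e11 : G 1 1 = g11) (e12 : G 1 2 = g12) (e13 : G 1 3 = g13)
    (e20 : G 2 0 = g02) (e21 : G 2 1 = g12) (e22 : G 2 2 = g22) (e23 : G 2 3 = g23)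
    (e30 : G 3 0 = g03) (e31 : G 3 1 = g13) (e32 : G 3 2 = g23) (e33 : G 3 3 = g33) :
    (Cm0 * G).trace =
      (2/5) * (g00 + (g00 + g11 - 2*g01) + (g00 + g22 - 2*g02) + (g00 + g33 - 2*g03) +
        g11 + (g11 + g22 - 2*g12) + (g11 + g33 - 2*g13) +
        g22 + (g22 + g33 - 2*g23) + g33) := by
  simp [Matrix.trace, Matrix.diag, Matrix.mul_apply, Fin.sum_univ_four, Cm0,
    Matrix.vecHead, Matrix.vecTail, Matrix.vecMul, dotProduct, e00, e01, e02, e03, e10, e11, e12, e13,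
    e20, e21, e22, e23, e30, e31, e32, e33]
  ring

set_option maxHeartbeats 2000000 in
lemma key2 (G : Matrix (Fin 4) (Fin 4) ℝ) (g00 g01 g02 g03 g11 g12 g13 g22 g23 g33 : ℝ)
    (e00 : G 0 0 = g00) (e01 : G 0 1 = g01) (e02 : G 0 2 = g02) (e03 : G 0 3 = g03)
    (e10 : G 1 0 = g01) (e11 : G 1 1 = g11) (e12 : G 1 2 = g12) (e13 : G 1 3 = g13)
    (e20 : G 2 0 = g02) (e21 : G 2 1 = g12) (e22 : G 2 2 = g22) (e23 : G 2 3 = g23)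
    (e30 : G 3 0 = g03) (e31 : G 3 1 = g13) (e32 : G 3 2 = g23) (e33 : G 3 3 = g33) :
    (Cm0 * G * (Cm0 * G)).trace =
      Theta g00 g11 g22 g33 (g00+g11-2*g01) (g00+g22-2*g02) (g00+g33-2*g03)
        (g11+g22-2*g12) (g11+g33-2*g13) (g22+g33-2*g23) / 900 := by
  simp [Matrix.trace, Matrix.diag, Matrix.mul_apply, Fin.sum_univ_four, Cm0,
    Matrix.vecHead, Matrix.vecTail, Matrix.vecMul, dotProduct, Theta, e00, e01, e02, e03, e10, e11, e12, e13,
    e20, e21, e22, e23, e30, e31, e32, e33]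
  ring

lemma Theta_nonneg (d12 d13 d14 d15 d23 d24 d25 d34 d35 d45 : ℝ) :
    0 ≤ Theta d12 d13 d14 d15 d23 d24 d25 d34 d35 d45 := by
  unfold Theta; positivity

/-- For affinely independent `p` and `a > 0`, the quality heuristic
`η⁽²⁾ = trace(A(R,T)) / (2·√(trace(A(R,T)·A(R,T)ᵀ)))` satisfies
`η⁽²⁾ = 6 · (Σ_{1 ≤ i < j ≤ 5} d_{ij}) / √Θ`; in particular `η⁽²⁾` does not depend
on `a`. -/
theorem quality_heuristic_two (p : Fin 5 → EuclideanSpace ℝ (Fin 4))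
    (hp : AffineIndependent ℝ p) (a : ℝ) (ha : 0 < a) :
    (shapeMatrix a p).trace /
        (2 * Real.sqrt (((shapeMatrix a p) * (shapeMatrix a p)ᵀ).trace)) =
      6 * (∑ ij ∈ Finset.univ.filter (fun ij : Fin 5 × Fin 5 => ij.1 < ij.2),
            ‖p ij.2 - p ij.1‖ ^ 2) /
        Real.sqrt (Theta (dsq p 0 1) (dsq p 0 2) (dsq p 0 3) (dsq p 0 4) (dsq p 1 2)
          (dsq p 1 3) (dsq p 1 4) (dsq p 2 3) (dsq p 2 4) (dsq p 3 4)) := by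
  have ha' : a ≠ 0 := ne_of_gt ha
  set G : Matrix (Fin 4) (Fin 4) ℝ := (edgeMatrix p)ᵀ * edgeMatrix p with hG
  -- the shape matrix as a scalar multiple of a conjugate of G
  have hshape : shapeMatrix a p = (a⁻¹ * a⁻¹) • (M0ᵀ * G * M0) := by
    rw [shapeMatrix, hRinv a ha', Matrix.transpose_smul, Matrix.smul_mul,
      Matrix.smul_mul, Matrix.mul_smul, smul_smul, mul_comm]
  have hGt : Gᵀ = G := by
    rw [hG, Matrix.transpose_mul, Matrix.transpose_transpose]
  have hsymm : (shapeMatrix a p)ᵀ = shapeMatrix a p := by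
    rw [hshape, Matrix.transpose_smul, Matrix.transpose_mul, Matrix.transpose_mul,
      Matrix.transpose_transpose, hGt, Matrix.mul_assoc]
    simp only [hG, Matrix.mul_assoc]
  -- entry facts
  have e (i j : Fin 4) : G i j = gram p i j := gram_entry p i j
  have es (i j : Fin 4) : G i j = gram p j i := (gram_entry p i j).trans (gram_symm p i j)
  -- trace of the shape matrix
  have htr : (shapeMatrix a p).trace =
      (a⁻¹ * a⁻¹) * ((2/5) * (gram p 0 0 +
        (gram p 0 0 + gram p 1 1 - 2*gram p 0 1) +
        (gram p 0 0 + gram p 2 2 - 2*gram p 0 2) +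
        (gram p 0 0 + gram p 3 3 - 2*gram p 0 3) +
        gram p 1 1 + (gram p 1 1 + gram p 2 2 - 2*gram p 1 2) +
        (gram p 1 1 + gram p 3 3 - 2*gram p 1 3) +
        gram p 2 2 + (gram p 2 2 + gram p 3 3 - 2*gram p 2 3) + gram p 3 3)) := by
    rw [hshape, Matrix.trace_smul, trace_conj1 M0 G Cm0 hM0M0, smul_eq_mul,
      key1 G (gram p 0 0) (gram p 0 1) (gram p 0 2) (gram p 0 3) (gram p 1 1)
        (gram p 1 2) (gram p 1 3) (gram p 2 2) (gram p 2 3) (gram p 3 3)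
        (e 0 0) (e 0 1) (e 0 2) (e 0 3) (es 1 0) (e 1 1) (e 1 2) (e 1 3)
        (es 2 0) (es 2 1) (e 2 2) (e 2 3) (es 3 0) (es 3 1) (es 3 2) (e 3 3)]
  -- trace of the squared shape matrix
  have hsq : ((shapeMatrix a p) * (shapeMatrix a p)ᵀ).trace =
      ((a⁻¹ * a⁻¹) * (a⁻¹ * a⁻¹)) *
        (Theta (gram p 0 0) (gram p 1 1) (gram p 2 2) (gram p 3 3)
          (gram p 0 0 + gram p 1 1 - 2*gram p 0 1)
          (gram p 0 0 + gram p 2 2 - 2*gram p 0 2)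
          (gram p 0 0 + gram p 3 3 - 2*gram p 0 3)
          (gram p 1 1 + gram p 2 2 - 2*gram p 1 2)
          (gram p 1 1 + gram p 3 3 - 2*gram p 1 3)
          (gram p 2 2 + gram p 3 3 - 2*gram p 2 3) / 900) := by
    rw [hsymm, hshape, Matrix.smul_mul, Matrix.mul_smul, smul_smul, Matrix.trace_smul,
      smul_eq_mul,
      trace_conj2 M0 G Cm0 hM0M0,
      key2 G (gram p 0 0) (gram p 0 1) (gram p 0 2) (gram p 0 3) (gram p 1 1)
        (gram p 1 2) (gram p 1 3) (gram p 2 2) (gram p 2 3) (gram p 3 3)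
        (e 0 0) (e 0 1) (e 0 2) (e 0 3) (es 1 0) (e 1 1) (e 1 2) (e 1 3)
        (es 2 0) (es 2 1) (e 2 2) (e 2 3) (es 3 0) (es 3 1) (es 3 2) (e 3 3)]
  -- the sum of squared edge lengths
  have hS : (∑ ij ∈ Finset.univ.filter (fun ij : Fin 5 × Fin 5 => ij.1 < ij.2),
      ‖p ij.2 - p ij.1‖ ^ 2) =
      dsq p 0 1 + dsq p 0 2 + dsq p 0 3 + dsq p 0 4 + dsq p 1 2 + dsq p 1 3 +
      dsq p 1 4 + dsq p 2 3 + dsq p 2 4 + dsq p 3 4 := by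
    rw [Finset.sum_filter, Fintype.sum_prod_type]
    simp [Fin.sum_univ_five, dsq]
    ring
  -- the squared distances in terms of the Gram matrix
  have hd01 : dsq p 0 1 = gram p 0 0 := dsq0_eq p 0
  have hd02 : dsq p 0 2 = gram p 1 1 := dsq0_eq p 1
  have hd03 : dsq p 0 3 = gram p 2 2 := dsq0_eq p 2
  have hd04 : dsq p 0 4 = gram p 3 3 := dsq0_eq p 3
  have hd12 : dsq p 1 2 = gram p 0 0 + gram p 1 1 - 2 * gram p 0 1 := dsq_eq p 0 1
  have hd13 : dsq p 1 3 = gram p 0 0 + gram p 2 2 - 2 * gram p 0 2 := dsq_eq p 0 2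
  have hd14 : dsq p 1 4 = gram p 0 0 + gram p 3 3 - 2 * gram p 0 3 := dsq_eq p 0 3
  have hd23 : dsq p 2 3 = gram p 1 1 + gram p 2 2 - 2 * gram p 1 2 := dsq_eq p 1 2
  have hd24 : dsq p 2 4 = gram p 1 1 + gram p 3 3 - 2 * gram p 1 3 := dsq_eq p 1 3
  have hd34 : dsq p 3 4 = gram p 2 2 + gram p 3 3 - 2 * gram p 2 3 := dsq_eq p 2 3
  rw [htr, hsq, hS, hd01, hd02, hd03, hd04, hd12, hd13, hd14, hd23, hd24, hd34]
  set Θ : ℝ := Theta (gram p 0 0) (gram p 1 1) (gram p 2 2) (gram p 3 3)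
      (gram p 0 0 + gram p 1 1 - 2*gram p 0 1)
      (gram p 0 0 + gram p 2 2 - 2*gram p 0 2)
      (gram p 0 0 + gram p 3 3 - 2*gram p 0 3)
      (gram p 1 1 + gram p 2 2 - 2*gram p 1 2)
      (gram p 1 1 + gram p 3 3 - 2*gram p 1 3)
      (gram p 2 2 + gram p 3 3 - 2*gram p 2 3) with hΘ
  have hΘ0 : 0 ≤ Θ := by rw [hΘ]; exact Theta_nonneg _ _ _ _ _ _ _ _ _ _
  have hsqrt : Real.sqrt ((a⁻¹ * a⁻¹) * (a⁻¹ * a⁻¹) * (Θ / 900)) =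
      (a⁻¹ * a⁻¹ / 30) * Real.sqrt Θ := by
    rw [show (a⁻¹ * a⁻¹) * (a⁻¹ * a⁻¹) * (Θ / 900) = (a⁻¹ * a⁻¹ / 30)^2 * Θ by ring,
      Real.sqrt_mul (by positivity), Real.sqrt_sq (by positivity)]
  rw [hsqrt]
  rcases eq_or_ne (Real.sqrt Θ) 0 with h0 | h0
  · rw [h0]; simp
  · have ha2 : a⁻¹ * a⁻¹ ≠ 0 := by positivity
    field_simp
    ring
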